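/- The amplitude amplification factor AAF₂(ν̃₂) = 1 + √(4 - 2ν̃₂²) + 2√(1 - 2ν̃₂²) of SFB₂ is strictly decreasing on (0, √(1/2)), tends to 5 as ν̃₂ → 0⁺, and tends to 1 + √3 as ν̃₂ → √(1/2)⁻. -/

import Mathlib

theorem stmt_6 (AAF₂ : ℝ → ℝ)
    (h₂ : ∀ ν : ℝ, AAF₂ ν = 1 + Real.sqrt (4 - 2 * ν ^ 2) + 2 * Real.sqrt (1 - 2 * ν ^ 2)) :
    StrictAntiOn AAF₂ (Set.Ioo 0 (Real.sqrt (1 / 2))) ∧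
    Filter.Tendsto AAF₂ (nhdsWithin 0 (Set.Ioi 0)) (nhds 5) ∧
    Filter.Tendsto AAF₂ (nhdsWithin (Real.sqrt (1 / 2)) (Set.Iio (Real.sqrt (1 / 2))))
      (nhds (1 + Real.sqrt 3)) := by
  have hfun : AAF₂ = fun ν => 1 + Real.sqrt (4 - 2 * ν ^ 2) + 2 * Real.sqrt (1 - 2 * ν ^ 2) :=
    funext h₂
  have hcont : Continuous AAF₂ := by
    rw [hfun]
    continuity
  refine ⟨?_, ?_, ?_⟩
  · intro a ha b hb hab
    rw [h₂ a, h₂ b]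
    have ha0 : 0 < a := ha.1
    have hb2 : b ^ 2 < 1 / 2 := by
      have := hb.2
      have hb0 : 0 ≤ b := le_of_lt (ha0.trans hab)
      nlinarith [Real.sq_sqrt (by norm_num : (1/2:ℝ) ≥ 0), Real.sqrt_nonneg (1/2:ℝ)]
    have hsq : a ^ 2 < b ^ 2 := by nlinarith
    have h1 : Real.sqrt (4 - 2 * b ^ 2) < Real.sqrt (4 - 2 * a ^ 2) :=
      Real.sqrt_lt_sqrt (by nlinarith) (by nlinarith)
    have h2' : Real.sqrt (1 - 2 * b ^ 2) < Real.sqrt (1 - 2 * a ^ 2) :=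
      Real.sqrt_lt_sqrt (by nlinarith) (by nlinarith)
    linarith
  · have h0 : AAF₂ 0 = 5 := by
      rw [h₂]
      norm_num
    have := (hcont.tendsto 0).mono_left (nhdsWithin_le_nhds (s := Set.Ioi 0))
    rwa [h0] at this
  · have h0 : AAF₂ (Real.sqrt (1/2)) = 1 + Real.sqrt 3 := by
      rw [h₂, Real.sq_sqrt (by norm_num : (1/2:ℝ) ≥ 0)]
      norm_num
    have := (hcont.tendsto (Real.sqrt (1/2))).mono_left (nhdsWithin_le_nhds (s := Set.Iio (Real.sqrt (1/2))))
    rwa [h0] at this
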